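/- Let G be a connected graph, s, t ∈ V(G), and k an integer, and let B = {v ∈ V(G) : dist_G(s, v) ≤ k} with t ∈ B. Let C be the vertex set of a connected component of G − B, and let G_C be the graph with vertex set (V(G) \ C) ∪ {v_C} (where v_C is a new vertex) in which two vertices u, w ∈ V(G) \ C are adjacent if and only if they are adjacent in G, and u ∈ V(G) \ C is adjacent to v_C if and only if u has a neighbor in C in G. Then G has a non-separating s-t path of length at most k if and only if G_C has a non-separating s-t path of length at most k. -/

import Mathlib

/-- The graph `G_C` obtained from `G` by contracting a vertex set `C` to a single new
vertex `v_C` (represented by `none`): its vertices are the vertices outside `C`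
together with `none`; two vertices outside `C` are adjacent iff they are adjacent in
`G`, and a vertex outside `C` is adjacent to `none` iff it has a neighbor in `C`. -/
def SimpleGraph.contractSet {V : Type*} (G : SimpleGraph V) (C : Set V) :
    SimpleGraph (Option ↥(Cᶜ : Set V)) where
  Adj a b :=
    match a, b with
    | some u, some w => G.Adj u w
    | some u, none => ∃ x ∈ C, G.Adj u x
    | none, some w => ∃ x ∈ C, G.Adj w x
    | none, none => False
  symm := by
    constructor
    rintro (u | u) (w | w) h
    · exact h
    · exact h
    · exact h
    · exact h.symm
  loopless := by
    constructor
    rintro (u | u) h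
    · exact h
    · exact G.ne_of_adj h rfl

namespace Stmt16
open SimpleGraph

variable {V : Type*} (G : SimpleGraph V) (C : Set V)

open Classical in
/-- Lift a vertex to the contracted graph. -/
noncomputable def up (v : V) : Option ↥(Cᶜ : Set V) :=
  if h : v ∈ C then none else some ⟨v, h⟩

/-- Project a vertex of the contracted graph, sending `none` to `c0`. -/
def down {C : Set V} (c0 : V) (x : Option ↥(Cᶜ : Set V)) : V := x.elim c0 Subtype.val

open Classical in
theorem up_eq_some {v : V} (h : v ∉ C) : up C v = some ⟨v, h⟩ := dif_neg h

open Classical in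
theorem up_eq_none {v : V} (h : v ∈ C) : up C v = none := dif_pos h

theorem contract_adj_some_some {u w : ↥(Cᶜ : Set V)} :
    (G.contractSet C).Adj (some u) (some w) ↔ G.Adj u.1 w.1 := Iff.rfl

theorem up_adj {v w : V} (hv : v ∉ C) (hw : w ∉ C) (h : G.Adj v w) :
    (G.contractSet C).Adj (up C v) (up C w) := by
  rw [up_eq_some C hv, up_eq_some C hw]
  exact h

/-- Lift a walk avoiding `C` to the contracted graph. -/
noncomputable def raise : ∀ {u w : V} (P : G.Walk u w), (∀ v ∈ P.support, v ∉ C) →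
    (G.contractSet C).Walk (up C u) (up C w)
  | _, _, .nil, _ => .nil
  | _, _, .cons (v := z) e P, h =>
      .cons (up_adj G C (h _ (by simp)) (h _ (by simp)) e)
        (raise P (fun v hv => h v (by simp [hv])))

theorem raise_support : ∀ {u w : V} (P : G.Walk u w) (h : ∀ v ∈ P.support, v ∉ C),
    (raise G C P h).support = P.support.map (up C)
  | _, _, .nil, _ => by simp [raise]
  | _, _, .cons (v := z) e P, h => by
      simp [raise, raise_support P]

theorem raise_length : ∀ {u w : V} (P : G.Walk u w) (h : ∀ v ∈ P.support, v ∉ C),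
    (raise G C P h).length = P.length
  | _, _, .nil, _ => by simp [raise]
  | _, _, .cons (v := z) e P, h => by
      simp [raise, raise_length P]

/-- Lower a walk of the contracted graph avoiding `none` to `G`. -/
def lower {C : Set V} (c0 : V) : ∀ {x y : Option ↥(Cᶜ : Set V)} (W : (G.contractSet C).Walk x y),
    none ∉ W.support → G.Walk (down c0 x) (down c0 y)
  | _, _, .nil, _ => .nil
  | some u, _, .cons (v := some z) e W, h =>
      .cons (e : G.Adj u.1 z.1) (lower c0 W (fun hn => h (List.mem_cons_of_mem _ hn)))
  | none, _, .cons _ W, h => absurd (by simp) h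
  | some u, _, .cons (v := none) e W, h =>
      absurd (List.mem_cons_of_mem _ W.start_mem_support) h

theorem lower_support {C : Set V} (c0 : V) :
    ∀ {x y : Option ↥(Cᶜ : Set V)} (W : (G.contractSet C).Walk x y)
      (h : none ∉ W.support),
    (lower G c0 W h).support = W.support.map (down c0)
  | _, _, .nil, _ => by simp [lower, down]
  | some u, _, .cons (v := some z) e W, h => by
      exact congrArg (List.cons u.1) (lower_support c0 W _)
  | none, _, .cons _ W, h => absurd (by simp) h
  | some u, _, .cons (v := none) e W, h =>
      absurd (List.mem_cons_of_mem _ W.start_mem_support) h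

theorem lower_length {C : Set V} (c0 : V) :
    ∀ {x y : Option ↥(Cᶜ : Set V)} (W : (G.contractSet C).Walk x y)
      (h : none ∉ W.support),
    (lower G c0 W h).length = W.length
  | _, _, .nil, _ => by simp [lower]
  | some u, _, .cons (v := some z) e W, h => by
      exact congrArg (· + 1) (lower_length c0 W _)
  | none, _, .cons _ W, h => absurd (by simp) h
  | some u, _, .cons (v := none) e W, h =>
      absurd (List.mem_cons_of_mem _ W.start_mem_support) h

end Stmt16

namespace Stmt16
open SimpleGraph

variable {V : Type*} (G : SimpleGraph V) (C : Set V)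

open Classical in
theorem up_eq_none_iff {v : V} : up C v = none ↔ v ∈ C := by
  by_cases h : v ∈ C
  · simp [up_eq_none C h, h]
  · simp [up_eq_some C h, h]

open Classical in
theorem up_eq_some_iff {v : V} {u : ↥(Cᶜ : Set V)} : up C v = some u ↔ v = u.1 := by
  constructor
  · intro h
    by_cases hv : v ∈ C
    · rw [up_eq_none C hv] at h; exact absurd h (by simp)
    · rw [up_eq_some C hv] at h
      exact congrArg Subtype.val (Option.some.inj h)
  · rintro rfl
    rw [up_eq_some C u.2]

theorem reachable_transfer {A B : Type*} {G : SimpleGraph A} {H : SimpleGraph B}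
    (f : A → B) (hf : ∀ a b, G.Adj a b → H.Reachable (f a) (f b)) {u v : A}
    (r : G.Reachable u v) : H.Reachable (f u) (f v) := by
  obtain ⟨w⟩ := r
  induction w with
  | nil => exact Reachable.refl _
  | cons e p ih => exact (hf _ _ e).trans ih

theorem reach_in_C {S : Set V} (hCconn : (G.induce C).Connected) (hCS : C ⊆ S)
    {a b : V} (ha : a ∈ C) (hb : b ∈ C) :
    (G.induce S).Reachable ⟨a, hCS ha⟩ ⟨b, hCS hb⟩ := by
  have h := hCconn.preconnected ⟨a, ha⟩ ⟨b, hb⟩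
  refine reachable_transfer (fun v => (⟨v.1, hCS v.2⟩ : ↥S)) (fun u w hadj => ?_) h
  exact SimpleGraph.Adj.reachable
    (show (G.induce S).Adj ⟨u.1, hCS u.2⟩ ⟨w.1, hCS w.2⟩ from hadj)

/-- The set of vertices of the contracted graph corresponding to a set `S ⊇ C`. -/
def upSet (C S : Set V) : Set (Option ↥(Cᶜ : Set V)) :=
  {x | x.elim True (fun u => u.1 ∈ S)}

theorem connected_contract_iff {c0 : V} (hc0 : c0 ∈ C)
    (hCconn : (G.induce C).Connected) {S : Set V} (hCS : C ⊆ S) :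
    (G.induce S).Connected ↔ ((G.contractSet C).induce (upSet C S)).Connected := by
  have upmem : ∀ v : V, v ∈ S → up C v ∈ upSet C S := by
    intro v hv
    by_cases h : v ∈ C
    · rw [up_eq_none C h]; trivial
    · rw [up_eq_some C h]; exact hv
  constructor
  · intro hS
    set f : ↥S → ↥(upSet C S) := fun v => ⟨up C v.1, upmem v.1 v.2⟩ with hf0
    have hf : ∀ a b : ↥S, (G.induce S).Adj a b →
        ((G.contractSet C).induce (upSet C S)).Reachable (f a) (f b) := by
      intro a b hab
      have hab' : G.Adj a.1 b.1 := hab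
      by_cases ha : a.1 ∈ C <;> by_cases hb : b.1 ∈ C
      · have : f a = f b := Subtype.ext (by
          show up C a.1 = up C b.1
          rw [up_eq_none C ha, up_eq_none C hb])
        rw [this]
      · refine SimpleGraph.Adj.reachable ?_
        show (G.contractSet C).Adj (up C a.1) (up C b.1)
        rw [up_eq_none C ha, up_eq_some C hb]
        exact ⟨a.1, ha, hab'.symm⟩
      · refine SimpleGraph.Adj.reachable ?_
        show (G.contractSet C).Adj (up C a.1) (up C b.1)
        rw [up_eq_some C ha, up_eq_none C hb]
        exact ⟨b.1, hb, hab'⟩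
      · refine SimpleGraph.Adj.reachable ?_
        show (G.contractSet C).Adj (up C a.1) (up C b.1)
        rw [up_eq_some C ha, up_eq_some C hb]
        exact hab'
    have key : ∀ x : ↥(upSet C S), ∃ a : ↥S, f a = x := by
      rintro ⟨(_ | u), hx⟩
      · exact ⟨⟨c0, hCS hc0⟩, Subtype.ext (up_eq_none C hc0)⟩
      · refine ⟨⟨u.1, hx⟩, Subtype.ext ?_⟩
        show up C u.1 = some u
        rw [up_eq_some C u.2]
    haveI : Nonempty ↥(upSet C S) := ⟨⟨none, trivial⟩⟩
    refine SimpleGraph.Connected.mk fun x y => ?_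
    obtain ⟨a, ha⟩ := key x
    obtain ⟨b, hb⟩ := key y
    rw [← ha, ← hb]
    exact reachable_transfer f hf (hS.preconnected a b)
  · intro hS'
    have gmem : ∀ x : ↥(upSet C S), down c0 x.1 ∈ S := by
      rintro ⟨(_ | u), hx⟩
      · exact hCS hc0
      · exact hx
    set g : ↥(upSet C S) → ↥S := fun x => ⟨down c0 x.1, gmem x⟩ with hg0
    have hg : ∀ a b : ↥(upSet C S), ((G.contractSet C).induce (upSet C S)).Adj a b →
        (G.induce S).Reachable (g a) (g b) := by
      rintro ⟨(_ | u), ha⟩ ⟨(_ | w), hb⟩ hab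
      · exact absurd hab (by simp [SimpleGraph.contractSet])
      · obtain ⟨x, hxC, hadj⟩ : ∃ x ∈ C, G.Adj w.1 x := hab
        exact (reach_in_C G C hCconn hCS hc0 hxC).trans
          (SimpleGraph.Adj.reachable (by exact hadj.symm))
      · obtain ⟨x, hxC, hadj⟩ : ∃ x ∈ C, G.Adj u.1 x := hab
        exact ((reach_in_C G C hCconn hCS hxC hc0).symm.trans
          (SimpleGraph.Adj.reachable (by exact hadj.symm))).symm
      · exact SimpleGraph.Adj.reachable (by exact (hab : G.Adj u.1 w.1))
    have hga : ∀ a : ↥S, (G.induce S).Reachable a (g ⟨up C a.1, upmem a.1 a.2⟩) := by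
      intro a
      by_cases h : a.1 ∈ C
      · have he : g ⟨up C a.1, upmem a.1 a.2⟩ = ⟨c0, hCS hc0⟩ := Subtype.ext (by
          show down c0 (up C a.1) = c0
          rw [up_eq_none C h]; rfl)
        rw [he]
        exact reach_in_C G C hCconn hCS h hc0
      · have he : g ⟨up C a.1, upmem a.1 a.2⟩ = a := Subtype.ext (by
          show down c0 (up C a.1) = a.1
          rw [up_eq_some C h]; rfl)
        rw [he]
    haveI : Nonempty ↥S := ⟨⟨c0, hCS hc0⟩⟩
    refine SimpleGraph.Connected.mk fun a b => ?_
    exact ((hga a).trans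
      (reachable_transfer g hg
        (hS'.preconnected ⟨up C a.1, upmem a.1 a.2⟩ ⟨up C b.1, upmem b.1 b.2⟩))).trans
      (hga b).symm

end Stmt16


open Stmt16

/-- let `G` be connected, `B = {v : dist_G(s, v) ≤ k}` with `t ∈ B`, and
let `C` be the vertex set of a connected component of `G − B` (nonempty, disjoint from
`B`, inducing a connected subgraph, and closed under adjacency outside `B`).  Then `G`
has a non-separating `s`-`t` path of length at most `k` iff `G_C` has a non-separating
`s`-`t` path of length at most `k`. -/
theorem stmt16 {V : Type*} (G : SimpleGraph V) (hG : G.Connected) (s t : V) (k : ℕ)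
    (htB : G.dist s t ≤ k)
    (C : Set V) (hCne : C.Nonempty)
    (hCB : ∀ x ∈ C, ¬ G.dist s x ≤ k)
    (hCconn : (G.induce C).Connected)
    (hCcomp : ∀ x ∈ C, ∀ y : V, ¬ G.dist s y ≤ k → G.Adj x y → y ∈ C) :
    (∃ P : G.Walk s t, P.IsPath ∧ P.length ≤ k ∧
        (G.induce {v | v ∉ P.support}).Connected) ↔
    (∃ Q : (G.contractSet C).Walk
        (some ⟨s, fun hs => hCB s hs (by simp [SimpleGraph.dist_self])⟩)
        (some ⟨t, fun ht => hCB t ht htB⟩),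
      Q.IsPath ∧ Q.length ≤ k ∧
        ((G.contractSet C).induce {x | x ∉ Q.support}).Connected) := by
  obtain ⟨c0, hc0⟩ := hCne
  constructor
  · rintro ⟨P, hP, hlen, hconn⟩
    have hsupp : ∀ v ∈ P.support, v ∉ C := by
      intro v hv hvC
      classical
      exact hCB v hvC (le_trans (le_trans (SimpleGraph.dist_le (P.takeUntil v hv))
        (SimpleGraph.Walk.length_takeUntil_le P hv)) hlen)
    refine ⟨(raise G C P hsupp).copy
      (up_eq_some C (hsupp s P.start_mem_support))
      (up_eq_some C (hsupp t P.end_mem_support)), ?_, ?_, ?_⟩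
    · rw [SimpleGraph.Walk.isPath_def, SimpleGraph.Walk.support_copy,
        raise_support]
      refine List.Nodup.map_on ?_ hP.support_nodup
      intro x hx y hy hxy
      rw [up_eq_some C (hsupp x hx), up_eq_some C (hsupp y hy)] at hxy
      exact congrArg Subtype.val (Option.some.inj hxy)
    · rw [SimpleGraph.Walk.length_copy, raise_length]
      exact hlen
    · have hset : {x | x ∉ ((raise G C P hsupp).copy
          (up_eq_some C (hsupp s P.start_mem_support))
          (up_eq_some C (hsupp t P.end_mem_support))).support}
          = upSet C {v | v ∉ P.support} := by
        ext x
        simp only [Set.mem_setOf_eq, SimpleGraph.Walk.support_copy,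
          raise_support, List.mem_map, upSet]
        cases x with
        | none =>
          simp only [Option.elim, iff_true]
          rintro ⟨v, hv, hup⟩
          exact hsupp v hv ((up_eq_none_iff C).mp hup)
        | some u =>
          simp only [Option.elim]
          constructor
          · intro h hu
            exact h ⟨u.1, hu, (up_eq_some_iff C).mpr rfl⟩
          · rintro h ⟨v, hv, hup⟩
            exact h (((up_eq_some_iff C).mp hup) ▸ hv)
      rw [hset]
      exact (connected_contract_iff G C hc0 hCconn
        (fun v hv hmem => hsupp v hmem hv)).mp hconn
  · rintro ⟨Q, hQ, hlen, hconn⟩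
    classical
    have hnone : none ∉ Q.support := by
      intro hn
      set W := Q.takeUntil none hn with hW
      have hWp : W.IsPath := hQ.takeUntil hn
      have hWlen : W.length ≤ k := le_trans (SimpleGraph.Walk.length_takeUntil_le Q hn) hlen
      cases hR : W.reverse with
      | cons e R =>
        rename_i z
        cases z with
        | none => exact e
        | some w =>
          have he : ∃ x ∈ C, G.Adj w.1 x := e
          obtain ⟨xc, hxc, hadj⟩ := he
          have hnodup : (none :: R.support).Nodup := by
            have h1 : W.reverse.support = none :: R.support := by
              rw [hR, SimpleGraph.Walk.support_cons]
            rw [← h1, SimpleGraph.Walk.support_reverse]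
            exact List.nodup_reverse.mpr hWp.support_nodup
          have hnR : none ∉ R.support := (List.nodup_cons.mp hnodup).1
          have hdist : G.dist s xc ≤ R.length + 1 := by
            refine le_trans
              (SimpleGraph.dist_le ((lower G c0 R hnR).reverse.concat (show G.Adj (down c0 (some w)) xc from hadj))) ?_
            rw [SimpleGraph.Walk.length_concat, SimpleGraph.Walk.length_reverse,
              lower_length]
          have hRW : R.length + 1 ≤ k := by
            have : W.reverse.length = R.length + 1 := by rw [hR]; simp
            rw [SimpleGraph.Walk.length_reverse] at this
            omega
          exact hCB xc hxc (le_trans hdist hRW)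
    refine ⟨lower G c0 Q hnone, ?_, ?_, ?_⟩
    · show (lower G c0 Q hnone).IsPath
      rw [SimpleGraph.Walk.isPath_def, lower_support]
      refine List.Nodup.map_on ?_ hQ.support_nodup
      intro x hx y hy hxy
      cases x with
      | none => exact absurd hx hnone
      | some u =>
        cases y with
        | none => exact absurd hy hnone
        | some v => exact congrArg some (Subtype.ext hxy)
    · show (lower G c0 Q hnone).length ≤ k
      rw [lower_length]; exact hlen
    · have hCS : C ⊆ {v | v ∉ (lower G c0 Q hnone).support} := by
        intro v hv hmem
        rw [lower_support, List.mem_map] at hmem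
        obtain ⟨x, hx, hdx⟩ := hmem
        cases x with
        | none => exact hnone hx
        | some u => exact u.2 (by rw [← hdx] at hv; exact hv)
      have hset : {x | x ∉ Q.support}
          = upSet C {v | v ∉ (lower G c0 Q hnone).support} := by
        ext x
        simp only [Set.mem_setOf_eq, lower_support, List.mem_map, upSet]
        cases x with
        | none => simp only [Option.elim, iff_true]; exact hnone
        | some u =>
          simp only [Option.elim]
          constructor
          · rintro h ⟨y, hy, hdy⟩
            cases y with
            | none => exact hnone hy
            | some v =>
              have : v = u := Subtype.ext hdy
              exact h (this ▸ hy)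
          · intro h hu
            exact h ⟨some u, hu, rfl⟩
      exact (connected_contract_iff G C hc0 hCconn hCS).mpr (hset ▸ hconn)
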